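/- Let G₀ be the disjoint union of α blocks, where each block consists of an edge (s,t) together with η−1 additional vertices each joined to both s and t, and let G_i (i = 1,…,α) be obtained from G₀ by deleting the (s,t) edge of the i-th block. Then in G_i the pair (s_i,t_i) is (2,η−1) connected, and D(f_{G₀}‖f_{G_i}) ≤ 2λ/(1 + cosh(2λ)^{η−1}) for the uniform-weight-λ Ising models. -/

import Mathlib

open Finset

noncomputable section

/-- spin value ±1 of a Boolean variable. -/
def spin (b : Bool) : ℝ := if b then 1 else -1

/-- the product of spins over an unordered pair of vertices. -/
def edgeTerm {V : Type*} (x : V → Bool) : Sym2 V → ℝ :=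
  Sym2.lift ⟨fun i j => spin (x i) * spin (x j), fun i j => mul_comm _ _⟩

variable {V : Type*} [Fintype V] [DecidableEq V]

/-- Ising energy of configuration `x` for edge set `E`. -/
def energy (E : Finset (Sym2 V)) (x : V → Bool) : ℝ := ∑ e ∈ E, edgeTerm x e

/-- partition function. -/
def partitionFn (E : Finset (Sym2 V)) (lam : ℝ) : ℝ :=
  ∑ x : V → Bool, Real.exp (lam * energy E x)

/-- Ising distribution with uniform edge weight `lam` on edge set `E`. -/
def ising (E : Finset (Sym2 V)) (lam : ℝ) (x : V → Bool) : ℝ :=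
  Real.exp (lam * energy E x) / partitionFn E lam

/-- correlation E[x_a x_b] under the Ising distribution. -/
def corr (E : Finset (Sym2 V)) (lam : ℝ) (a b : V) : ℝ :=
  ∑ x : V → Bool, ising E lam x * (spin (x a) * spin (x b))

/-- P(x_a x_b = +1). -/
def probAgree (E : Finset (Sym2 V)) (lam : ℝ) (a b : V) : ℝ :=
  ∑ x : V → Bool, if x a = x b then ising E lam x else 0

/-- P(x_a x_b = -1). -/
def probDisagree (E : Finset (Sym2 V)) (lam : ℝ) (a b : V) : ℝ :=
  ∑ x : V → Bool, if x a ≠ x b then ising E lam x else 0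

/-- KL divergence between two distributions on configurations. -/
def KL (f g : (V → Bool) → ℝ) : ℝ := ∑ x : V → Bool, f x * Real.log (f x / g x)

/-- two walks between `a` and `b` are internally disjoint if common vertices are endpoints. -/
def InternallyDisjoint {W : Type*} (G : SimpleGraph W) {a b : W} (P Q : G.Walk a b) : Prop :=
  ∀ v ∈ P.support, v ∈ Q.support → v = a ∨ v = b

/-- `a` and `b` are (ℓ,d) connected: d internally vertex-disjoint paths of length ≤ ℓ. -/
def LDConnected {W : Type*} (G : SimpleGraph W) (ℓ d : ℕ) (a b : W) : Prop :=
  ∃ P : Fin d → G.Walk a b,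
    (∀ i, (P i).IsPath ∧ (P i).length ≤ ℓ) ∧
    ∀ i j, i ≠ j → InternallyDisjoint G (P i) (P j)

/-- G₀: disjoint union of α blocks; block j consists of s=(j,0), t=(j,1) joined by an edge,
and η−1 extra vertices (j,k), 2 ≤ k ≤ η, each joined to both s and t. -/
def blockGraph (α η : ℕ) : SimpleGraph (Fin α × Fin (η+1)) where
  Adj u v := u.1 = v.1 ∧ u.2 ≠ v.2 ∧ (u.2.val ≤ 1 ∨ v.2.val ≤ 1)
  symm := ⟨by
    rintro u v ⟨h1, h2, h3⟩
    exact ⟨h1.symm, h2.symm, h3.symm⟩⟩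
  loopless := ⟨by rintro u ⟨_, h, _⟩; exact h rfl⟩

/-- G_i: G₀ with the (s,t) edge of block i removed. -/
def blockGraphDel (α η : ℕ) (i : Fin α) : SimpleGraph (Fin α × Fin (η+1)) where
  Adj u v := (blockGraph α η).Adj u v ∧ ¬(u.1 = i ∧ u.2.val ≤ 1 ∧ v.2.val ≤ 1)
  symm := ⟨by
    rintro u v ⟨h, hn⟩
    refine ⟨h.symm, fun ⟨hv, hv2, hu2⟩ => hn ⟨h.1.trans hv, hu2, hv2⟩⟩⟩
  loopless := ⟨by rintro u ⟨h, _⟩; exact h.ne rfl⟩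

instance (α η : ℕ) : DecidableRel (blockGraph α η).Adj := fun u v =>
  decidable_of_iff (u.1 = v.1 ∧ u.2 ≠ v.2 ∧ (u.2.val ≤ 1 ∨ v.2.val ≤ 1)) Iff.rfl

instance (α η : ℕ) (i : Fin α) : DecidableRel (blockGraphDel α η i).Adj := fun u v =>
  decidable_of_iff ((blockGraph α η).Adj u v ∧ ¬(u.1 = i ∧ u.2.val ≤ 1 ∧ v.2.val ≤ 1)) Iff.rfl

namespace S13

lemma conn (α η : ℕ) (hη : 1 ≤ η) (i : Fin α) :
    LDConnected (blockGraphDel α η i) 2 (η - 1) (i, (0 : Fin (η+1))) (i, (1 : Fin (η+1))) := by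
  have h0 : ((0 : Fin (η+1)) : ℕ) = 0 := rfl
  have hm : 1 % (η+1) = 1 := Nat.mod_eq_of_lt (by omega)
  have h1 : ((1 : Fin (η+1)) : ℕ) = 1 := by rw [Fin.val_one']; exact hm
  set G := blockGraphDel α η i with hG
  have ha : ∀ j : Fin (η-1), G.Adj (i, (0 : Fin (η+1))) (i, ⟨j.val + 2, by omega⟩) := by
    intro j
    refine ⟨⟨rfl, ?_, Or.inl (by simp [h0])⟩, ?_⟩
    · intro h; have := congrArg Fin.val h; rw [h0] at this; simp at this
    · rintro ⟨-, -, h⟩; simp at h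
  have hb : ∀ j : Fin (η-1), G.Adj ((i, ⟨j.val + 2, by omega⟩) : Fin α × Fin (η+1)) (i, (1 : Fin (η+1))) := by
    intro j
    refine ⟨⟨rfl, ?_, Or.inr h1.le⟩, ?_⟩
    · intro h; have := congrArg Fin.val h; rw [h1] at this; simp at this
    · rintro ⟨-, h, -⟩; simp at h
  refine ⟨fun j => SimpleGraph.Walk.cons (ha j) (SimpleGraph.Walk.cons (hb j) SimpleGraph.Walk.nil), ?_, ?_⟩
  · intro j
    constructor
    · rw [SimpleGraph.Walk.isPath_def]
      simp [SimpleGraph.Walk.support, Prod.ext_iff, Fin.ext_iff, h0, h1]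
      omega
    · simp [SimpleGraph.Walk.length]
  · intro j k hjk v hv hv'
    simp only [SimpleGraph.Walk.support_cons, SimpleGraph.Walk.support_nil,
      List.mem_cons, List.mem_singleton, List.not_mem_nil, or_false] at hv hv'
    rcases hv' with h' | h' | h'
    · exact Or.inl h'
    · rcases hv with h | h | h
      · exact Or.inl h
      · exfalso
        have := congrArg (fun p : Fin α × Fin (η+1) => (p.2 : ℕ)) (h.symm.trans h')
        simp at this
        exact hjk (Fin.ext (by omega))
      · exact Or.inr h
    · exact Or.inr h'
end S13
namespace S13
variable {α η : ℕ}

lemma val_one (hη : 1 ≤ η) : ((1 : Fin (η+1)) : ℕ) = 1 := by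
  rw [Fin.val_one']; exact Nat.mod_eq_of_lt (by omega)

lemma fin01 {u : Fin (η+1)} (h : u.val ≤ 1) (hη : 1 ≤ η) : u = 0 ∨ u = 1 := by
  rcases Nat.le_one_iff_eq_zero_or_eq_one.mp h with h' | h'
  · exact Or.inl (Fin.ext (by simp [h']))
  · exact Or.inr (Fin.ext (by rw [h', val_one hη]))

lemma st_ne (hη : 1 ≤ η) (i : Fin α) :
    ((i, (0 : Fin (η+1))) : Fin α × Fin (η+1)) ≠ (i, 1) := by
  intro h
  have := congrArg (fun p : Fin α × Fin (η+1) => (p.2 : ℕ)) h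
  simp [val_one hη] at this
  omega

lemma edge_not_mem (i : Fin α) :
    s(((i, (0 : Fin (η+1))) : Fin α × Fin (η+1)), (i, 1)) ∉ (blockGraphDel α η i).edgeFinset := by
  rw [SimpleGraph.mem_edgeFinset, SimpleGraph.mem_edgeSet]
  rintro ⟨-, h⟩
  exact h ⟨rfl, by simp, (Nat.mod_le 1 (η+1)).trans le_rfl⟩

lemma edge_insert (hη : 1 ≤ η) (i : Fin α) :
    (blockGraph α η).edgeFinset
      = insert s(((i, (0 : Fin (η+1))) : Fin α × Fin (η+1)), (i, 1))
          (blockGraphDel α η i).edgeFinset := by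
  ext e
  induction e using Sym2.ind with
  | _ u v =>
    simp only [SimpleGraph.mem_edgeFinset, SimpleGraph.mem_edgeSet, Finset.mem_insert,
      Sym2.eq, Sym2.rel_iff', Prod.mk.injEq, Prod.swap_prod_mk]
    constructor
    · intro h
      by_cases hd : u.1 = i ∧ u.2.val ≤ 1 ∧ v.2.val ≤ 1
      · left
        obtain ⟨h1, h2, -⟩ := h
        obtain ⟨hui, hu2, hv2⟩ := hd
        have hvi : v.1 = i := h1 ▸ hui
        rcases fin01 hu2 hη with hu | hu <;> rcases fin01 hv2 hη with hv | hv
        · exact absurd (Prod.ext (hui.trans hvi.symm) (hu.trans hv.symm)) (fun hh => h2 (congrArg Prod.snd hh))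
        · exact Or.inl ⟨Prod.ext hui hu, Prod.ext hvi hv⟩
        · exact Or.inr ⟨Prod.ext hui hu, Prod.ext hvi hv⟩
        · exact absurd (Prod.ext (hui.trans hvi.symm) (hu.trans hv.symm)) (fun hh => h2 (congrArg Prod.snd hh))
      · exact Or.inr ⟨h, hd⟩
    · intro h
      rcases h with (⟨hu, hv⟩ | ⟨hu, hv⟩) | ⟨h, -⟩
      · subst hu; subst hv
        exact ⟨rfl, fun h => st_ne hη i (Prod.ext rfl h), Or.inl (by simp)⟩
      · subst hu; subst hv
        exact ⟨rfl, fun h => st_ne hη i (Prod.ext rfl h.symm), Or.inr (by simp)⟩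
      · exact h
end S13
namespace S13
variable {α η : ℕ}

/-- middle vertices of block `i`. -/
def Mid (i : Fin α) (v : Fin α × Fin (η+1)) : Prop := v.1 = i ∧ 2 ≤ v.2.val

instance (i : Fin α) : DecidablePred (Mid (η := η) i) := fun _ => instDecidableAnd

/-- the middle vertices are in bijection with `Fin (η-1)`. -/
def midEquiv (i : Fin α) : {v : Fin α × Fin (η+1) // Mid i v} ≃ Fin (η-1) where
  toFun m := ⟨m.1.2.val - 2, by obtain ⟨-, h⟩ := m.2; have := m.1.2.isLt; omega⟩
  invFun j := ⟨(i, ⟨j.val + 2, by have := j.isLt; omega⟩), rfl, by simp⟩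
  left_inv m := by
    obtain ⟨⟨v1, v2⟩, h1, h2⟩ := m
    apply Subtype.ext
    apply Prod.ext
    · exact h1.symm
    · apply Fin.ext; simp at h2 ⊢; omega
  right_inv j := by apply Fin.ext; simp

lemma card_mid (i : Fin α) : Fintype.card {v : Fin α × Fin (η+1) // Mid i v} = η - 1 := by
  rw [Fintype.card_congr (midEquiv i), Fintype.card_fin]

/-- edges from the middle vertices of block `i` to s (b = true) or t (b = false). -/
def fmid (i : Fin α) (z : {v : Fin α × Fin (η+1) // Mid i v} × Bool) : Sym2 (Fin α × Fin (η+1)) :=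
  s(((i, if z.2 then 0 else 1) : Fin α × Fin (η+1)), z.1.1)

lemma fmid_inj (hη : 1 ≤ η) (i : Fin α) : Function.Injective (fmid (α := α) (η := η) i) := by
  rintro ⟨k, b⟩ ⟨k', b'⟩ h
  rw [fmid, fmid, Sym2.eq, Sym2.rel_iff'] at h
  have hknot : ∀ (c : Fin (η+1)) (k'' : {v : Fin α × Fin (η+1) // Mid i v}), c.val ≤ 1 →
      ((i, c) : Fin α × Fin (η+1)) ≠ k''.1 := by
    intro c k'' hc h
    obtain ⟨-, h2⟩ := k''.2
    rw [← h] at h2; simp at h2; omega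
  rcases h with h | h
  · rw [Prod.mk.injEq] at h
    obtain ⟨h1, h2⟩ := h
    have hb : b = b' := by
      by_contra hbb
      have := congrArg (fun p : Fin α × Fin (η+1) => (p.2 : ℕ)) h1
      cases b <;> cases b' <;> simp_all [val_one hη]
    subst hb
    have hk : k = k' := Subtype.ext h2
    subst hk; rfl
  · exfalso
    rw [Prod.swap_prod_mk, Prod.mk.injEq] at h
    exact hknot _ k' (by cases b <;> simp [val_one hη, Nat.mod_le]) h.1
end S13
namespace S13
variable {α η : ℕ}

lemma fmid_mem (hη : 1 ≤ η) (i : Fin α) (z : {v : Fin α × Fin (η+1) // Mid i v} × Bool) :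
    fmid i z ∈ (blockGraphDel α η i).edgeFinset := by
  obtain ⟨⟨⟨v1, v2⟩, hv1, hv2⟩, b⟩ := z
  simp only [fmid]
  rw [SimpleGraph.mem_edgeFinset, SimpleGraph.mem_edgeSet]
  have hc : ∀ c : Fin (η+1), c = (if b then 0 else 1) → c.val ≤ 1 := by
    rintro c rfl; cases b <;> simp [val_one hη, Nat.mod_le]
  refine ⟨⟨hv1.symm, ?_, Or.inl (hc _ rfl)⟩, ?_⟩
  · intro h
    have hval := congrArg Fin.val h
    have hle := hc (if b then 0 else 1) rfl
    simp at hval hv2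
    omega
  · rintro ⟨-, -, h⟩
    simp at h hv2
    omega

/-- every edge of G_i not of the form `fmid z` avoids block i entirely. -/
lemma not_fmid_avoids (hη : 1 ≤ η) (i : Fin α) {e : Sym2 (Fin α × Fin (η+1))}
    (he : e ∈ (blockGraphDel α η i).edgeFinset)
    (hne : ∀ z, fmid i z ≠ e) :
    ∀ v ∈ e, v.1 ≠ i := by
  induction e using Sym2.ind with
  | _ u v =>
    rw [SimpleGraph.mem_edgeFinset, SimpleGraph.mem_edgeSet] at he
    obtain ⟨⟨hb1, hb2, hb3⟩, hdel⟩ := he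
    -- claim: if one endpoint is a middle vertex of block i, e is an fmid edge
    have claim : ∀ w w' : Fin α × Fin (η+1), w.1 = w'.1 → w.2 ≠ w'.2 → (w.2.val ≤ 1) →
        Mid i w' → ∃ z, fmid i z = s(w, w') := by
      intro w w' h1 h2 h3 hm
      have hwi : w.1 = i := h1.trans hm.1
      rcases fin01 h3 hη with h0 | h0
      · exact ⟨(⟨w', hm⟩, true), by simp [fmid, ← hwi, ← h0]⟩
      · exact ⟨(⟨w', hm⟩, false), by simp [fmid, ← hwi, ← h0]⟩
    intro w hw hwi
    -- w ∈ s(u,v)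
    rw [Sym2.mem_iff] at hw
    -- both endpoints are in block i then
    have hui : u.1 = i := by rcases hw with rfl | rfl; exacts [hwi, hb1.trans hwi]
    have hvi : v.1 = i := hb1 ▸ hui
    -- one of u,v has val ≥ 2 (else the edge is deleted)
    have h2 : 2 ≤ u.2.val ∨ 2 ≤ v.2.val := by
      by_contra hcon
      push_neg at hcon
      exact hdel ⟨hui, by omega, by omega⟩
    rcases h2 with h2 | h2
    · have h3 : v.2.val ≤ 1 := by rcases hb3 with h | h <;> omega
      obtain ⟨z, hz⟩ := claim v u hb1.symm (Ne.symm hb2) h3 ⟨hui, h2⟩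
      exact hne z (hz.trans (Sym2.eq_swap.symm))
    · have h3 : u.2.val ≤ 1 := by rcases hb3 with h | h <;> omega
      obtain ⟨z, hz⟩ := claim u v hb1 hb2 h3 ⟨hvi, h2⟩
      exact hne z hz
end S13
namespace S13
variable {α η : ℕ}

def E1 (α η : ℕ) (i : Fin α) : Finset (Sym2 (Fin α × Fin (η+1))) :=
  (blockGraphDel α η i).edgeFinset

def FmidS (α η : ℕ) (i : Fin α) : Finset (Sym2 (Fin α × Fin (η+1))) :=
  Finset.image (fmid i) Finset.univ

lemma Fmid_subset (hη : 1 ≤ η) (i : Fin α) : FmidS α η i ⊆ E1 α η i := by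
  intro e he
  rw [FmidS, Finset.mem_image] at he
  obtain ⟨z, -, rfl⟩ := he
  exact fmid_mem hη i z

lemma spin_edgeTerm (x : Fin α × Fin (η+1) → Bool) (u v : Fin α × Fin (η+1)) :
    edgeTerm x s(u, v) = spin (x u) * spin (x v) := rfl

lemma energy_decomp (hη : 1 ≤ η) (i : Fin α) (x : Fin α × Fin (η+1) → Bool) :
    energy (E1 α η i) x = energy (E1 α η i \ FmidS α η i) x
      + ∑ k : {v : Fin α × Fin (η+1) // Mid i v},
          (spin (x (i, 0)) + spin (x (i, 1))) * spin (x k.1) := by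
  rw [energy, ← Finset.sum_sdiff (Fmid_subset hη i)]
  rw [energy]
  congr 1
  rw [FmidS, Finset.sum_image (fun z _ z' _ h => fmid_inj hη i h)]
  rw [Fintype.sum_prod_type]
  refine Finset.sum_congr rfl fun k _ => ?_
  rw [Fintype.sum_bool]
  simp [fmid, spin_edgeTerm]
  ring

lemma energy_out_eq (hη : 1 ≤ η) (i : Fin α) (x y : Fin α × Fin (η+1) → Bool)
    (h : ∀ v : Fin α × Fin (η+1), v.1 ≠ i → x v = y v) :
    energy (E1 α η i \ FmidS α η i) x = energy (E1 α η i \ FmidS α η i) y := by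
  refine Finset.sum_congr rfl fun e he => ?_
  rw [Finset.mem_sdiff] at he
  obtain ⟨he1, he2⟩ := he
  have hne : ∀ z, fmid i z ≠ e := by
    intro z hz
    exact he2 (by rw [FmidS, Finset.mem_image]; exact ⟨z, Finset.mem_univ z, hz⟩)
  have havoid := not_fmid_avoids hη i he1 hne
  induction e using Sym2.ind with
  | _ u v =>
    rw [spin_edgeTerm, spin_edgeTerm,
      h u (havoid u (Sym2.mem_mk_left u v)), h v (havoid v (Sym2.mem_mk_right u v))]
end S13
namespace S13
variable {α η : ℕ}

lemma s_not_mid (hη : 1 ≤ η) (i : Fin α) : ¬ Mid i ((i, (0 : Fin (η+1))) : Fin α × Fin (η+1)) := by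
  rintro ⟨-, h⟩; simp at h

lemma t_not_mid (hη : 1 ≤ η) (i : Fin α) : ¬ Mid i ((i, (1 : Fin (η+1))) : Fin α × Fin (η+1)) := by
  rintro ⟨-, h⟩; rw [val_one hη] at h; omega

/-- configurations split into middle and outer parts. -/
def ep (α η : ℕ) (i : Fin α) : (Fin α × Fin (η+1) → Bool) ≃
    ({v : Fin α × Fin (η+1) // Mid i v} → Bool) × ({v : Fin α × Fin (η+1) // ¬ Mid i v} → Bool) :=
  Equiv.piEquivPiSubtypeProd (Mid i) (fun _ => Bool)

lemma ep_symm_mid (i : Fin α) (m : {v : Fin α × Fin (η+1) // Mid i v} → Bool)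
    (y : {v : Fin α × Fin (η+1) // ¬ Mid i v} → Bool) (k : {v : Fin α × Fin (η+1) // Mid i v}) :
    (ep α η i).symm (m, y) k.1 = m k := by
  rw [ep, Equiv.piEquivPiSubtypeProd_symm_apply, dif_pos k.2]

lemma ep_symm_out (i : Fin α) (m : {v : Fin α × Fin (η+1) // Mid i v} → Bool)
    (y : {v : Fin α × Fin (η+1) // ¬ Mid i v} → Bool) (v : Fin α × Fin (η+1)) (hv : ¬ Mid i v) :
    (ep α η i).symm (m, y) v = y ⟨v, hv⟩ := by
  rw [ep, Equiv.piEquivPiSubtypeProd_symm_apply, dif_neg hv]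

/-- outer energy as a function of the outer configuration. -/
def Rfun (α η : ℕ) (i : Fin α) (y : {v : Fin α × Fin (η+1) // ¬ Mid i v} → Bool) : ℝ :=
  energy (E1 α η i \ FmidS α η i) ((ep α η i).symm (fun _ => true, y))

lemma Rfun_eq (hη : 1 ≤ η) (i : Fin α) (m : {v : Fin α × Fin (η+1) // Mid i v} → Bool)
    (y : {v : Fin α × Fin (η+1) // ¬ Mid i v} → Bool) :
    energy (E1 α η i \ FmidS α η i) ((ep α η i).symm (m, y)) = Rfun α η i y := by
  refine energy_out_eq hη i _ _ fun v hv => ?_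
  have hvm : ¬ Mid i v := fun h => hv h.1
  rw [ep_symm_out i m y v hvm, ep_symm_out i _ y v hvm]

def SA (α η : ℕ) (hη : 1 ≤ η) (i : Fin α) (lam : ℝ) : ℝ :=
  ∑ y : {v : Fin α × Fin (η+1) // ¬ Mid i v} → Bool,
    if y ⟨(i, 0), s_not_mid hη i⟩ = y ⟨(i, 1), t_not_mid hη i⟩
    then Real.exp (lam * Rfun α η i y) else 0

def SB (α η : ℕ) (hη : 1 ≤ η) (i : Fin α) (lam : ℝ) : ℝ :=
  ∑ y : {v : Fin α × Fin (η+1) // ¬ Mid i v} → Bool,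
    if y ⟨(i, 0), s_not_mid hη i⟩ ≠ y ⟨(i, 1), t_not_mid hη i⟩
    then Real.exp (lam * Rfun α η i y) else 0

/-- flipping the outer configuration at t identifies SA and SB. -/
lemma SA_eq_SB (hη : 1 ≤ η) (i : Fin α) (lam : ℝ) : SA α η hη i lam = SB α η hη i lam := by
  classical
  set sv : {v : Fin α × Fin (η+1) // ¬ Mid i v} := ⟨(i, 0), s_not_mid hη i⟩ with hsv
  set tv : {v : Fin α × Fin (η+1) // ¬ Mid i v} := ⟨(i, 1), t_not_mid hη i⟩ with htv
  have hst : sv ≠ tv := fun h => st_ne hη i (congrArg Subtype.val h)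
  -- use the involution of flipping the value at tv
  have key : ∀ y, Rfun α η i (Function.update y tv (!(y tv))) = Rfun α η i y := by
    intro y
    rw [Rfun, Rfun]
    refine energy_out_eq hη i _ _ fun v hv => ?_
    have hvm : ¬ Mid i v := fun h => hv h.1
    rw [ep_symm_out i _ _ v hvm, ep_symm_out i _ _ v hvm]
    have : (⟨v, hvm⟩ : {v : Fin α × Fin (η+1) // ¬ Mid i v}) ≠ tv := by
      intro h; rw [htv] at h
      have hv1 : v = ((i, 1) : Fin α × Fin (η+1)) := congrArg Subtype.val h
      exact hv (congrArg Prod.fst hv1)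
    rw [Function.update_of_ne this]
  let e : ({v : Fin α × Fin (η+1) // ¬ Mid i v} → Bool) ≃
      ({v : Fin α × Fin (η+1) // ¬ Mid i v} → Bool) :=
    ⟨fun y => Function.update y tv (!(y tv)), fun y => Function.update y tv (!(y tv)),
     fun y => by
        ext w
        by_cases hw : w = tv
        · subst hw; simp
        · simp [Function.update_of_ne hw],
     fun y => by
        ext w
        by_cases hw : w = tv
        · subst hw; simp
        · simp [Function.update_of_ne hw]⟩
  rw [SA, SB, ← Equiv.sum_comp e
    (fun y => if y sv ≠ y tv then Real.exp (lam * Rfun α η i y) else 0)]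
  refine Finset.sum_congr rfl fun y _ => ?_
  have h1 : e y sv = y sv := Function.update_of_ne hst _ _
  have h2 : e y tv = !(y tv) := by
    show Function.update y tv (!(y tv)) tv = _
    simp
  have h3 : Rfun α η i (e y) = Rfun α η i y := key y
  rw [h1, h2, h3]
  by_cases hy : y sv = y tv
  · rw [if_pos hy, if_pos (show y sv ≠ !(y tv) by rw [hy]; cases y tv <;> simp)]
  · rw [if_neg hy,
      if_neg (not_not_intro (show y sv = !(y tv) by cases hs : y sv <;> cases ht : y tv <;> simp_all))]
end S13
namespace S13
variable {α η : ℕ}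

lemma spin_true : spin true = 1 := rfl
lemma spin_false : spin false = -1 := rfl

def AA (α η : ℕ) (i : Fin α) (lam : ℝ) : ℝ :=
  ∑ x : Fin α × Fin (η+1) → Bool,
    if x (i, 0) = x (i, 1) then Real.exp (lam * energy (E1 α η i) x) else 0

def BB (α η : ℕ) (i : Fin α) (lam : ℝ) : ℝ :=
  ∑ x : Fin α × Fin (η+1) → Bool,
    if x (i, 0) ≠ x (i, 1) then Real.exp (lam * energy (E1 α η i) x) else 0

lemma sum_bool_exp (lam c : ℝ) :
    ∑ b : Bool, Real.exp (lam * (c * spin b)) = Real.exp (lam * c) + Real.exp (-(lam * c)) := by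
  rw [Fintype.sum_bool, spin_true, spin_false,
    show lam * (c * 1) = lam * c from by ring, show lam * (c * (-1)) = -(lam * c) from by ring]

lemma inner_sum (hη : 1 ≤ η) (i : Fin α) (lam : ℝ)
    (y : {v : Fin α × Fin (η+1) // ¬ Mid i v} → Bool) :
    ∑ m : {v : Fin α × Fin (η+1) // Mid i v} → Bool,
        Real.exp (lam * energy (E1 α η i) ((ep α η i).symm (m, y)))
      = Real.exp (lam * Rfun α η i y) *
        (Real.exp (lam * (spin (y ⟨(i, 0), s_not_mid hη i⟩) + spin (y ⟨(i, 1), t_not_mid hη i⟩)))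
         + Real.exp (-(lam * (spin (y ⟨(i, 0), s_not_mid hη i⟩)
              + spin (y ⟨(i, 1), t_not_mid hη i⟩))))) ^ (η - 1) := by
  set c : ℝ := spin (y ⟨(i, 0), s_not_mid hη i⟩) + spin (y ⟨(i, 1), t_not_mid hη i⟩) with hc
  have hx : ∀ m, energy (E1 α η i) ((ep α η i).symm (m, y))
      = Rfun α η i y + ∑ k : {v : Fin α × Fin (η+1) // Mid i v}, c * spin (m k) := by
    intro m
    rw [energy_decomp hη i, Rfun_eq hη i m y]
    congr 1
    refine Finset.sum_congr rfl fun k _ => ?_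
    rw [ep_symm_mid i m y k, ep_symm_out i m y _ (s_not_mid hη i),
      ep_symm_out i m y _ (t_not_mid hη i)]
  calc ∑ m : {v : Fin α × Fin (η+1) // Mid i v} → Bool,
        Real.exp (lam * energy (E1 α η i) ((ep α η i).symm (m, y)))
      = ∑ m : {v : Fin α × Fin (η+1) // Mid i v} → Bool,
          Real.exp (lam * Rfun α η i y) *
            ∏ k : {v : Fin α × Fin (η+1) // Mid i v}, Real.exp (lam * (c * spin (m k))) := by
        refine Finset.sum_congr rfl fun m _ => ?_
        rw [hx m, mul_add, Real.exp_add, Finset.mul_sum, Real.exp_sum]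
    _ = Real.exp (lam * Rfun α η i y) *
          ∑ m : {v : Fin α × Fin (η+1) // Mid i v} → Bool,
            ∏ k : {v : Fin α × Fin (η+1) // Mid i v}, Real.exp (lam * (c * spin (m k))) := by
        rw [Finset.mul_sum]
    _ = Real.exp (lam * Rfun α η i y) *
          ∏ k : {v : Fin α × Fin (η+1) // Mid i v}, ∑ b : Bool, Real.exp (lam * (c * spin b)) := by
        rw [← Fintype.prod_sum (fun (_ : {v : Fin α × Fin (η+1) // Mid i v}) (b : Bool) => Real.exp (lam * (c * spin b)))]
    _ = _ := by
        rw [Finset.prod_congr rfl fun k _ => sum_bool_exp lam c, Finset.prod_const,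
          Finset.card_univ, card_mid i]

lemma AA_eq (hη : 1 ≤ η) (i : Fin α) (lam : ℝ) :
    AA α η i lam = (2 * Real.cosh (2 * lam)) ^ (η - 1) * SA α η hη i lam := by
  rw [AA, ← Equiv.sum_comp (ep α η i).symm
    (fun x => if x (i, 0) = x (i, 1) then Real.exp (lam * energy (E1 α η i) x) else 0),
    Fintype.sum_prod_type, Finset.sum_comm, SA, Finset.mul_sum]
  refine Finset.sum_congr rfl fun y _ => ?_
  calc (∑ m : {v : Fin α × Fin (η+1) // Mid i v} → Bool,
        if (ep α η i).symm (m, y) (i, 0) = (ep α η i).symm (m, y) (i, 1)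
        then Real.exp (lam * energy (E1 α η i) ((ep α η i).symm (m, y))) else 0)
      = ∑ m : {v : Fin α × Fin (η+1) // Mid i v} → Bool,
          if y ⟨(i, 0), s_not_mid hη i⟩ = y ⟨(i, 1), t_not_mid hη i⟩
          then Real.exp (lam * energy (E1 α η i) ((ep α η i).symm (m, y))) else 0 := by
        refine Finset.sum_congr rfl fun m _ => ?_
        rw [ep_symm_out i m y _ (s_not_mid hη i), ep_symm_out i m y _ (t_not_mid hη i)]
    _ = _ := by
        by_cases hy : y ⟨(i, 0), s_not_mid hη i⟩ = y ⟨(i, 1), t_not_mid hη i⟩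
        · rw [if_pos hy]
          simp only [if_pos hy]
          rw [inner_sum hη i lam y, hy]
          have h2 : ∀ b, Real.exp (lam * (spin b + spin b))
              + Real.exp (-(lam * (spin b + spin b))) = 2 * Real.cosh (2 * lam) := by
            intro b
            cases b
            · rw [spin_false, Real.cosh_eq,
                show lam * (-1 + -1 : ℝ) = -(2 * lam) from by ring, neg_neg, Real.exp_neg]
              ring
            · rw [spin_true, Real.cosh_eq, show lam * (1 + 1 : ℝ) = 2 * lam from by ring]
              ring
          rw [h2 (y ⟨(i, 1), t_not_mid hη i⟩)]
          ring
        · rw [if_neg hy]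
          simp only [if_neg hy]
          simp
    
lemma BB_eq (hη : 1 ≤ η) (i : Fin α) (lam : ℝ) :
    BB α η i lam = (2 : ℝ) ^ (η - 1) * SB α η hη i lam := by
  rw [BB, ← Equiv.sum_comp (ep α η i).symm
    (fun x => if x (i, 0) ≠ x (i, 1) then Real.exp (lam * energy (E1 α η i) x) else 0),
    Fintype.sum_prod_type, Finset.sum_comm, SB, Finset.mul_sum]
  refine Finset.sum_congr rfl fun y _ => ?_
  calc (∑ m : {v : Fin α × Fin (η+1) // Mid i v} → Bool,
        if (ep α η i).symm (m, y) (i, 0) ≠ (ep α η i).symm (m, y) (i, 1)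
        then Real.exp (lam * energy (E1 α η i) ((ep α η i).symm (m, y))) else 0)
      = ∑ m : {v : Fin α × Fin (η+1) // Mid i v} → Bool,
          if y ⟨(i, 0), s_not_mid hη i⟩ ≠ y ⟨(i, 1), t_not_mid hη i⟩
          then Real.exp (lam * energy (E1 α η i) ((ep α η i).symm (m, y))) else 0 := by
        refine Finset.sum_congr rfl fun m _ => ?_
        rw [ep_symm_out i m y _ (s_not_mid hη i), ep_symm_out i m y _ (t_not_mid hη i)]
    _ = _ := by
        by_cases hy : y ⟨(i, 0), s_not_mid hη i⟩ = y ⟨(i, 1), t_not_mid hη i⟩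
        · rw [if_neg (not_not_intro hy)]
          simp only [if_neg (not_not_intro hy)]
          simp
        · rw [if_pos hy]
          simp only [if_pos hy]
          rw [inner_sum hη i lam y]
          have h2 : Real.exp (lam * (spin (y ⟨(i, 0), s_not_mid hη i⟩)
                + spin (y ⟨(i, 1), t_not_mid hη i⟩)))
              + Real.exp (-(lam * (spin (y ⟨(i, 0), s_not_mid hη i⟩)
                + spin (y ⟨(i, 1), t_not_mid hη i⟩)))) = 2 := by
            have hspin : spin (y ⟨(i, 0), s_not_mid hη i⟩)
                + spin (y ⟨(i, 1), t_not_mid hη i⟩) = 0 := by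
              cases hs : y ⟨(i, 0), s_not_mid hη i⟩ <;>
                cases ht : y ⟨(i, 1), t_not_mid hη i⟩ <;> simp_all [spin_true, spin_false]
            rw [hspin, mul_zero, neg_zero, Real.exp_zero]; norm_num
          rw [h2]
          ring

lemma AA_eq_cosh_BB (hη : 1 ≤ η) (i : Fin α) (lam : ℝ) :
    AA α η i lam = Real.cosh (2 * lam) ^ (η - 1) * BB α η i lam := by
  rw [AA_eq hη i lam, BB_eq hη i lam, SA_eq_SB hη i lam, mul_pow]
  ring
end S13
namespace S13
variable {α η : ℕ}

lemma spin_spin (a b : Bool) : spin a * spin b = if a = b then 1 else -1 := by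
  cases a <;> cases b <;> simp [spin]

lemma energy_E0 (hη : 1 ≤ η) (i : Fin α) (x : Fin α × Fin (η+1) → Bool) :
    energy (blockGraph α η).edgeFinset x
      = spin (x (i, 0)) * spin (x (i, 1)) + energy (E1 α η i) x := by
  rw [energy, edge_insert hη i, Finset.sum_insert (edge_not_mem i)]
  rfl

lemma exp_split (hη : 1 ≤ η) (i : Fin α) (lam : ℝ) (x : Fin α × Fin (η+1) → Bool) :
    Real.exp (lam * energy (blockGraph α η).edgeFinset x)
      = (if x (i, 0) = x (i, 1) then Real.exp lam else Real.exp (-lam))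
          * Real.exp (lam * energy (E1 α η i) x) := by
  rw [energy_E0 hη i x, mul_add, Real.exp_add, spin_spin]
  by_cases hx : x (i, 0) = x (i, 1)
  · rw [if_pos hx, if_pos hx, mul_one]
  · rw [if_neg hx, if_neg hx, mul_neg_one]

lemma sum_split (i : Fin α) (f : (Fin α × Fin (η+1) → Bool) → ℝ) (a b : ℝ) :
    ∑ x : Fin α × Fin (η+1) → Bool, (if x (i, 0) = x (i, 1) then a else b) * f x
      = a * (∑ x : Fin α × Fin (η+1) → Bool, if x (i, 0) = x (i, 1) then f x else 0)
        + b * (∑ x : Fin α × Fin (η+1) → Bool, if x (i, 0) ≠ x (i, 1) then f x else 0) := by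
  rw [Finset.mul_sum, Finset.mul_sum, ← Finset.sum_add_distrib]
  refine Finset.sum_congr rfl fun x _ => ?_
  by_cases hx : x (i, 0) = x (i, 1) <;> simp [hx]

lemma Z1_eq (i : Fin α) (lam : ℝ) :
    partitionFn (E1 α η i) lam = AA α η i lam + BB α η i lam := by
  rw [partitionFn, AA, BB, ← Finset.sum_add_distrib]
  refine Finset.sum_congr rfl fun x _ => ?_
  by_cases hx : x (i, 0) = x (i, 1) <;> simp [hx]

lemma Z0_eq (hη : 1 ≤ η) (i : Fin α) (lam : ℝ) :
    partitionFn (blockGraph α η).edgeFinset lam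
      = Real.exp lam * AA α η i lam + Real.exp (-lam) * BB α η i lam := by
  rw [partitionFn, Finset.sum_congr rfl fun x _ => exp_split hη i lam x, sum_split]
  rfl

lemma corr_sum (hη : 1 ≤ η) (i : Fin α) (lam : ℝ) :
    ∑ x : Fin α × Fin (η+1) → Bool,
        Real.exp (lam * energy (blockGraph α η).edgeFinset x) * (spin (x (i, 0)) * spin (x (i, 1)))
      = Real.exp lam * AA α η i lam - Real.exp (-lam) * BB α η i lam := by
  have h : ∀ x : Fin α × Fin (η+1) → Bool,
      Real.exp (lam * energy (blockGraph α η).edgeFinset x) * (spin (x (i, 0)) * spin (x (i, 1)))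
        = (if x (i, 0) = x (i, 1) then Real.exp lam else -Real.exp (-lam))
            * Real.exp (lam * energy (E1 α η i) x) := by
    intro x
    rw [exp_split hη i lam x, spin_spin]
    by_cases hx : x (i, 0) = x (i, 1)
    · rw [if_pos hx, if_pos hx, if_pos hx]; ring
    · rw [if_neg hx, if_neg hx, if_neg hx]; ring
  rw [Finset.sum_congr rfl fun x _ => h x, sum_split]
  show _ * AA α η i lam + _ * BB α η i lam = _
  ring

lemma AA_pos (i : Fin α) (lam : ℝ) : 0 < AA α η i lam := by
  rw [AA]
  refine Finset.sum_pos' (fun x _ => ?_) ⟨fun _ => true, Finset.mem_univ _, ?_⟩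
  · by_cases hx : x (i, 0) = x (i, 1) <;> simp [hx, (Real.exp_pos _).le]
  · simp [Real.exp_pos]

lemma BB_pos (hη : 1 ≤ η) (i : Fin α) (lam : ℝ) : 0 < BB α η i lam := by
  rw [BB]
  refine Finset.sum_pos' (fun x _ => ?_)
    ⟨fun v => decide (v = ((i, 1) : Fin α × Fin (η+1))), Finset.mem_univ _, ?_⟩
  · by_cases hx : x (i, 0) ≠ x (i, 1) <;> simp [hx, (Real.exp_pos _).le]
  · rw [if_pos]
    · exact Real.exp_pos _
    · simp [st_ne hη i]

lemma real_bound (a b lam : ℝ) (ha : 0 < a) (hb : 0 < b) (hlam : 0 < lam) :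
    lam * ((Real.exp lam * a - Real.exp (-lam) * b) / (Real.exp lam * a + Real.exp (-lam) * b))
      + (Real.log (a + b) - Real.log (Real.exp lam * a + Real.exp (-lam) * b))
    ≤ 2 * lam * b / (a + b) := by
  set z0 := Real.exp lam * a + Real.exp (-lam) * b with hz0def
  have hz0 : 0 < z0 := by positivity
  have hab : 0 < a + b := by positivity
  have h1 : (Real.exp lam * a - Real.exp (-lam) * b) / z0 ≤ 1 := by
    rw [div_le_one hz0]
    nlinarith [Real.exp_pos (-lam)]
  set c := lam * (a - b) / (a + b) with hc
  have hcc : c * (a + b) = lam * (a - b) := by rw [hc]; field_simp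
  have h2 : Real.log (a + b) - Real.log z0 ≤ -c := by
    have key : Real.exp c * (a + b) ≤ z0 := by
      have e1 : Real.exp c * Real.exp (lam - c) = Real.exp lam := by
        rw [← Real.exp_add]; ring_nf
      have e2 : Real.exp c * Real.exp (-lam - c) = Real.exp (-lam) := by
        rw [← Real.exp_add]; ring_nf
      have i1 := Real.add_one_le_exp (lam - c)
      have i2 := Real.add_one_le_exp (-lam - c)
      have j1 : Real.exp c * a * (lam - c + 1) ≤ Real.exp c * a * Real.exp (lam - c) :=
        mul_le_mul_of_nonneg_left i1 (by positivity)
      have j2 : Real.exp c * b * (-lam - c + 1) ≤ Real.exp c * b * Real.exp (-lam - c) :=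
        mul_le_mul_of_nonneg_left i2 (by positivity)
      have hcc2 : Real.exp c * (c * (a + b)) = Real.exp c * (lam * (a - b)) := by rw [hcc]
      nlinarith [Real.exp_pos c]
    have hlog := Real.log_le_log (by positivity) key
    rw [Real.log_mul (Real.exp_ne_zero c) (ne_of_gt hab), Real.log_exp] at hlog
    linarith
  have h3 : lam * ((Real.exp lam * a - Real.exp (-lam) * b) / z0) ≤ lam * 1 :=
    mul_le_mul_of_nonneg_left h1 hlam.le
  have h4 : lam * 1 + -c = 2 * lam * b / (a + b) := by
    rw [hc]; field_simp; ring
  linarith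
end S13
namespace S13
variable {α η : ℕ}

set_option maxHeartbeats 1000000 in
lemma kl_main (hη : 1 ≤ η) (i : Fin α) (lam : ℝ) (hlam : 0 < lam) :
    KL (ising (blockGraph α η).edgeFinset lam) (ising (blockGraphDel α η i).edgeFinset lam)
      ≤ 2 * lam / (1 + Real.cosh (2*lam) ^ (η - 1)) := by
  have hA : 0 < AA α η i lam := AA_pos i lam
  have hB : 0 < BB α η i lam := BB_pos hη i lam
  have hZ1 : partitionFn (E1 α η i) lam = AA α η i lam + BB α η i lam := Z1_eq i lam
  have hZ0 : partitionFn (blockGraph α η).edgeFinset lam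
      = Real.exp lam * AA α η i lam + Real.exp (-lam) * BB α η i lam := Z0_eq hη i lam
  have hZ1p : 0 < partitionFn (E1 α η i) lam := by rw [hZ1]; positivity
  have hZ0p : 0 < partitionFn (blockGraph α η).edgeFinset lam := by
    rw [hZ0]; positivity
  have hEdel : (blockGraphDel α η i).edgeFinset = E1 α η i := rfl
  -- pointwise rewriting of the KL summand
  have hfg : ∀ x : Fin α × Fin (η+1) → Bool,
      ising (blockGraph α η).edgeFinset lam x *
          Real.log (ising (blockGraph α η).edgeFinset lam x / ising (E1 α η i) lam x)
        = ising (blockGraph α η).edgeFinset lam x *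
            (lam * (spin (x (i, 0)) * spin (x (i, 1)))
              + (Real.log (partitionFn (E1 α η i) lam)
                  - Real.log (partitionFn (blockGraph α η).edgeFinset lam))) := by
    intro x
    congr 1
    simp only [ising]
    rw [Real.log_div (ne_of_gt (div_pos (Real.exp_pos _) hZ0p))
        (ne_of_gt (div_pos (Real.exp_pos _) hZ1p)),
      Real.log_div (ne_of_gt (Real.exp_pos _)) (ne_of_gt hZ0p),
      Real.log_div (ne_of_gt (Real.exp_pos _)) (ne_of_gt hZ1p),
      Real.log_exp, Real.log_exp, energy_E0 hη i x]
    ring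
  have hsum1 : ∑ x : Fin α × Fin (η+1) → Bool, ising (blockGraph α η).edgeFinset lam x = 1 := by
    simp only [ising]
    rw [← Finset.sum_div]
    exact div_self (ne_of_gt hZ0p)
  have hsum2 : ∑ x : Fin α × Fin (η+1) → Bool,
      ising (blockGraph α η).edgeFinset lam x * (spin (x (i, 0)) * spin (x (i, 1)))
        = (Real.exp lam * AA α η i lam - Real.exp (-lam) * BB α η i lam)
            / partitionFn (blockGraph α η).edgeFinset lam := by
    rw [← corr_sum hη i lam, Finset.sum_div]
    refine Finset.sum_congr rfl fun x _ => ?_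
    simp only [ising]
    rw [div_mul_eq_mul_div]
  have hKL : KL (ising (blockGraph α η).edgeFinset lam) (ising (blockGraphDel α η i).edgeFinset lam)
      = lam * ((Real.exp lam * AA α η i lam - Real.exp (-lam) * BB α η i lam)
            / (Real.exp lam * AA α η i lam + Real.exp (-lam) * BB α η i lam))
        + (Real.log (AA α η i lam + BB α η i lam)
            - Real.log (Real.exp lam * AA α η i lam + Real.exp (-lam) * BB α η i lam)) := by
    rw [KL, hEdel, Finset.sum_congr rfl fun x _ => hfg x]
    have hexp : ∀ x : Fin α × Fin (η+1) → Bool,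
        ising (blockGraph α η).edgeFinset lam x *
            (lam * (spin (x (i, 0)) * spin (x (i, 1)))
              + (Real.log (partitionFn (E1 α η i) lam)
                  - Real.log (partitionFn (blockGraph α η).edgeFinset lam)))
          = lam * (ising (blockGraph α η).edgeFinset lam x * (spin (x (i, 0)) * spin (x (i, 1))))
            + (Real.log (partitionFn (E1 α η i) lam)
                  - Real.log (partitionFn (blockGraph α η).edgeFinset lam))
                * ising (blockGraph α η).edgeFinset lam x := fun x => by ring
    rw [Finset.sum_congr rfl fun x _ => hexp x, Finset.sum_add_distrib, ← Finset.mul_sum,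
      ← Finset.mul_sum, hsum1, hsum2, mul_one, hZ1, hZ0]
  rw [hKL]
  have hbound := real_bound (AA α η i lam) (BB α η i lam) lam hA hB hlam
  refine le_trans hbound ?_
  -- final algebra with AA = cosh^(η-1) * BB
  have hK : (1:ℝ) ≤ Real.cosh (2*lam) := Real.one_le_cosh (2*lam)
  have hKp : (0:ℝ) < 1 + Real.cosh (2*lam) ^ (η-1) := by positivity
  rw [AA_eq_cosh_BB hη i lam]
  rw [show Real.cosh (2*lam) ^ (η-1) * BB α η i lam + BB α η i lam
      = (1 + Real.cosh (2*lam) ^ (η-1)) * BB α η i lam from by ring]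
  rw [show (2:ℝ) * lam * BB α η i lam = BB α η i lam * (2 * lam) from by ring,
    show (1 + Real.cosh (2*lam) ^ (η-1)) * BB α η i lam
      = BB α η i lam * (1 + Real.cosh (2*lam) ^ (η-1)) from by ring,
    mul_div_mul_left _ _ (ne_of_gt hB)]
end S13


/-- In G_i the pair (s_i,t_i) is (2,η−1) connected, and
D(f_{G₀}‖f_{G_i}) ≤ 2λ/(1 + cosh(2λ)^{η−1}). -/
theorem stmt_13 (α η : ℕ) (hα : 1 ≤ α) (hη : 1 ≤ η) (i : Fin α)
    (lam : ℝ) (hlam : 0 < lam) :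
    LDConnected (blockGraphDel α η i) 2 (η - 1) (i, (0 : Fin (η+1))) (i, (1 : Fin (η+1))) ∧
    KL (ising (blockGraph α η).edgeFinset lam) (ising (blockGraphDel α η i).edgeFinset lam)
      ≤ 2 * lam / (1 + Real.cosh (2*lam) ^ (η - 1)) :=
  ⟨S13.conn α η hη i, S13.kl_main hη i lam hlam⟩
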